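/- Let t ≥ 1 and let C be a CA_X((t+1)!; t, t+1, 2). Then for each 0 ≤ i ≤ t+1 there is a constant x_i such that every vector in {0,1}^{t+1} of weight i appears as a row of C exactly x_i times; moreover, x_i + x_{i+1} = i!·(t−i)! for 0 ≤ i ≤ t. -/

import Mathlib

/-- A permutation `π` of `[v]` covers a sequence `s` of distinct elements if the
elements appear in order in `π`, i.e. `π⁻¹(s i) < π⁻¹(s j)` for `i < j`. -/
def SeqCovers {v t : ℕ} (π : Equiv.Perm (Fin v)) (s : Fin t → Fin v) : Prop :=
  ∀ i j : Fin t, i < j → π.symm (s i) < π.symm (s j)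

instance {v t : ℕ} (s : Fin t → Fin v) :
    DecidablePred fun π : Equiv.Perm (Fin v) => SeqCovers π s := fun π => by
  unfold SeqCovers; infer_instance

/-- `X` is a sequence covering array SCA(N; t, v): a set of `N` permutations of `[v]`
such that every sequence of `t` distinct elements of `[v]` is covered by at least one. -/
def IsSCA (N t v : ℕ) (X : Finset (Equiv.Perm (Fin v))) : Prop :=
  X.card = N ∧ ∀ s : Fin t → Fin v, Function.Injective s → ∃ π ∈ X, SeqCovers π s

/-- `μ(T)` for a `t`-way interaction with symbol vector `ν`: the product over symbols `σ`
of `|τ_σ(T)|!` where `τ_σ(T)` is the set of positions carrying symbol `σ`. -/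
def mu {w t : ℕ} (ν : Fin t → Fin w) : ℕ :=
  ∏ σ : Fin w, Nat.factorial (Finset.univ.filter fun i => ν i = σ).card

/-- The number of rows of `C` covering the interaction given by distinct columns `c i`
and symbols `ν i`. -/
def CoversCount {κ : Type} {w t : ℕ}
    (C : Multiset (κ → Fin w)) (c : Fin t → κ) (ν : Fin t → Fin w) : ℕ :=
  C.countP fun ρ => ∀ i, ρ (c i) = ν i

/-- `C` is an excess coverage array CA_X(N; t, k, v): an `N × k` array (multiset of rows)
over `[v]` in which every `t`-way interaction `T` is covered by at least `μ(T)` rows. -/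
def IsCAX (N t k v : ℕ) (C : Multiset (Fin k → Fin v)) : Prop :=
  Multiset.card C = N ∧
  ∀ c : Fin t → Fin k, Function.Injective c →
    ∀ ν : Fin t → Fin v, mu ν ≤ CoversCount C c ν

lemma countP_sum {t : ℕ} (C : Multiset (Fin (t+1) → Fin 2)) (c : Fin t → Fin (t+1)) :
    ∑ ν : Fin t → Fin 2, CoversCount C c ν = Multiset.card C := by
  unfold CoversCount
  induction C using Multiset.induction with
  | empty => simp
  | cons ρ C ih =>
    simp only [Multiset.countP_cons, Finset.sum_add_distrib, ih, Multiset.card_cons]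
    have h1 : ∑ ν : Fin t → Fin 2, (if ∀ i, ρ (c i) = ν i then 1 else 0) = 1 := by
      have h2 : ∀ ν : Fin t → Fin 2, (∀ i, ρ (c i) = ν i) ↔ ν = fun i => ρ (c i) := by
        intro ν; constructor
        · intro h; funext i; exact (h i).symm
        · intro h i; rw [h]
      calc ∑ ν : Fin t → Fin 2, (if ∀ i, ρ (c i) = ν i then 1 else 0)
          = ∑ ν : Fin t → Fin 2, (if ν = (fun i => ρ (c i)) then 1 else 0) :=
            Finset.sum_congr rfl (fun ν _ => if_congr (h2 ν) rfl rfl)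
        _ = 1 := by
            rw [Finset.sum_ite_eq' Finset.univ (fun i => ρ (c i)) (fun _ => 1)]
            simp
    rw [h1]

-- fiber cards add to t
lemma fiber_card_add {n : ℕ} (u : Fin n → Fin 2) :
    (Finset.univ.filter fun i => u i = 0).card + (Finset.univ.filter fun i => u i = 1).card = n := by
  have h : ∀ i, (u i = 0) ↔ ¬ (u i = 1) := by intro i; omega
  calc (Finset.univ.filter fun i => u i = 0).card + (Finset.univ.filter fun i => u i = 1).card
      = (Finset.univ.filter fun i => ¬ u i = 1).card + (Finset.univ.filter fun i => u i = 1).card := by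
        rw [Finset.filter_congr (fun i _ => h i)]
    _ = n := by rw [Nat.add_comm, Finset.card_filter_add_card_filter_not]; simp

lemma mu_eq {t : ℕ} (ν : Fin t → Fin 2) :
    mu ν = Nat.factorial (t - (Finset.univ.filter fun i => ν i = 1).card)
         * Nat.factorial (Finset.univ.filter fun i => ν i = 1).card := by
  have := fiber_card_add ν
  unfold mu
  rw [Fin.prod_univ_two]
  congr 2
  omega

lemma mu_sum {t : ℕ} : ∑ ν : Fin t → Fin 2, mu ν = Nat.factorial (t + 1) := by
  have hb : Function.Bijective (fun ν : Fin t → Fin 2 => Finset.univ.filter fun i => ν i = 1) := by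
    constructor
    · intro ν ν' h
      funext i
      simp only at h
      have : (i ∈ Finset.univ.filter fun j => ν j = 1) ↔ (i ∈ Finset.univ.filter fun j => ν' j = 1) := by rw [h]
      simp only [Finset.mem_filter, Finset.mem_univ, true_and] at this
      omega
    · intro S
      refine ⟨fun i => if i ∈ S then 1 else 0, ?_⟩
      ext i
      by_cases h : i ∈ S <;> simp [h]
  have key : ∑ ν : Fin t → Fin 2, mu ν
      = ∑ S : Finset (Fin t), Nat.factorial (t - S.card) * Nat.factorial S.card := by
    rw [← Fintype.sum_bijective _ hb _ (fun S => Nat.factorial (t - S.card) * Nat.factorial S.card)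
      (fun ν => mu_eq ν)]
  rw [key]
  have : ∑ S : Finset (Fin t), Nat.factorial (t - S.card) * Nat.factorial S.card
      = ∑ S ∈ (Finset.univ : Finset (Fin t)).powerset, Nat.factorial (t - S.card) * Nat.factorial S.card := by
    rw [Finset.powerset_univ]
  rw [this, Finset.sum_powerset]
  have hcard : (Finset.univ : Finset (Fin t)).card = t := by simp
  rw [hcard]
  have step : ∀ j ∈ Finset.range (t+1),
      (∑ S ∈ Finset.powersetCard j (Finset.univ : Finset (Fin t)),
        Nat.factorial (t - S.card) * Nat.factorial S.card) = Nat.factorial t := by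
    intro j hj
    rw [Finset.mem_range] at hj
    have hj' : j ≤ t := by omega
    have : ∀ S ∈ Finset.powersetCard j (Finset.univ : Finset (Fin t)),
        Nat.factorial (t - S.card) * Nat.factorial S.card = Nat.factorial (t-j) * Nat.factorial j := by
      intro S hS
      rw [(Finset.mem_powersetCard.mp hS).2]
    rw [Finset.sum_congr rfl this, Finset.sum_const, Finset.card_powersetCard, hcard, smul_eq_mul]
    have := Nat.choose_mul_factorial_mul_factorial hj' (n := t)
    calc t.choose j * (Nat.factorial (t-j) * Nat.factorial j)
        = t.choose j * Nat.factorial j * Nat.factorial (t-j) := by ring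
      _ = Nat.factorial t := this
  rw [Finset.sum_congr rfl step, Finset.sum_const, Finset.card_range, smul_eq_mul, Nat.factorial_succ]

-- step 3: termwise equality
lemma covers_eq {t : ℕ} {C : Multiset (Fin (t+1) → Fin 2)}
    (hC : IsCAX (Nat.factorial (t + 1)) t (t + 1) 2 C) (j : Fin (t+1)) (ν : Fin t → Fin 2) :
    CoversCount C j.succAbove ν = mu ν := by
  obtain ⟨hcard, hcov⟩ := hC
  have hle : ∀ ν' : Fin t → Fin 2, mu ν' ≤ CoversCount C j.succAbove ν' :=
    hcov j.succAbove Fin.succAbove_right_injective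
  by_contra hne
  have hlt : mu ν < CoversCount C j.succAbove ν := lt_of_le_of_ne (hle ν) (fun h => hne h.symm)
  have : ∑ ν' : Fin t → Fin 2, mu ν' < ∑ ν' : Fin t → Fin 2, CoversCount C j.succAbove ν' :=
    Finset.sum_lt_sum (fun ν' _ => hle ν') ⟨ν, Finset.mem_univ ν, hlt⟩
  rw [mu_sum, countP_sum, hcard] at this
  exact lt_irrefl _ this

-- generic: countP of a two-element disjunction
lemma countP_or {α : Type*} [DecidableEq α] (C : Multiset α) {a b : α} (hab : a ≠ b) :
    C.countP (fun ρ => ρ = a ∨ ρ = b) = C.count a + C.count b := by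
  induction C using Multiset.induction with
  | empty => simp
  | cons ρ C ih =>
    rw [Multiset.countP_cons, Multiset.count_cons, Multiset.count_cons, ih]
    by_cases h0 : ρ = a
    · subst h0
      rw [if_pos (Or.inl rfl), if_pos rfl, if_neg (fun h => hab h.symm)]
      omega
    · by_cases h1 : ρ = b
      · subst h1
        rw [if_pos (Or.inr rfl), if_pos rfl, if_neg (fun h => h0 h.symm)]
        omega
      · rw [if_neg (by tauto), if_neg (fun h => h0 h.symm), if_neg (fun h => h1 h.symm)]
        omega

-- step 4: CoversCount unfolds to two counts
lemma coversCount_succAbove {t : ℕ} (C : Multiset (Fin (t+1) → Fin 2))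
    (j : Fin (t+1)) (v : Fin (t+1) → Fin 2) :
    CoversCount C j.succAbove (fun i => v (j.succAbove i))
      = C.count (Function.update v j 0) + C.count (Function.update v j 1) := by
  have hne : Function.update v j 0 ≠ Function.update v j 1 := by
    intro h
    have := congrFun h j
    simp at this
  have hiff : ∀ ρ : Fin (t+1) → Fin 2,
      (∀ i, ρ (j.succAbove i) = v (j.succAbove i)) ↔
      (ρ = Function.update v j 0 ∨ ρ = Function.update v j 1) := by
    intro ρ
    constructor
    · intro h
      have key : ∀ σ : Fin 2, ρ j = σ → ρ = Function.update v j σ := by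
        intro σ hσ
        funext k
        by_cases hk : k = j
        · subst hk; simp [hσ]
        · obtain ⟨i, hi⟩ := Fin.exists_succAbove_eq hk
          rw [Function.update_of_ne hk, ← hi, h i]
      rcases (by omega : ρ j = 0 ∨ ρ j = 1) with h0 | h1
      · exact Or.inl (key 0 h0)
      · exact Or.inr (key 1 h1)
    · rintro (rfl | rfl) <;> intro i <;>
        rw [Function.update_of_ne (Fin.succAbove_ne j i)]
  unfold CoversCount
  rw [Multiset.countP_congr rfl (fun ρ _ => propext (hiff ρ)), countP_or C hne]

def wt {n : ℕ} (u : Fin n → Fin 2) : ℕ := (Finset.univ.filter fun j => u j = 1).card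

lemma wt_le {n : ℕ} (u : Fin n → Fin 2) : wt u ≤ n := by
  have := Finset.card_filter_le (Finset.univ : Finset (Fin n)) (fun j => u j = 1)
  simpa [wt] using this

-- Lemma B
lemma filter_card_succAbove {t : ℕ} (w : Fin (t+1) → Fin 2) (j : Fin (t+1)) (σ : Fin 2) :
    (Finset.univ.filter fun i => w (j.succAbove i) = σ).card + (if w j = σ then 1 else 0)
      = (Finset.univ.filter fun k => w k = σ).card := by
  rw [Finset.card_filter, Finset.card_filter,
    Fin.sum_univ_succAbove (fun k => if w k = σ then 1 else 0) j]
  omega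

lemma wt_update_one {t : ℕ} (v : Fin (t+1) → Fin 2) (j : Fin (t+1)) (hv : v j = 0) :
    wt (Function.update v j 1) = wt v + 1 := by
  unfold wt
  rw [Finset.card_filter, Finset.card_filter,
    Fin.sum_univ_succAbove (fun k => if Function.update v j 1 k = 1 then 1 else 0) j,
    Fin.sum_univ_succAbove (fun k => if v k = 1 then 1 else 0) j]
  have h1 : Function.update v j 1 j = 1 := by simp
  have h2 : ∀ i : Fin t, Function.update v j 1 (j.succAbove i) = v (j.succAbove i) :=
    fun i => Function.update_of_ne (Fin.succAbove_ne j i) _ _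
  simp only [h1, h2, hv]
  norm_num
  omega

lemma mu_restrict {t : ℕ} (v : Fin (t+1) → Fin 2) (j : Fin (t+1)) (hv : v j = 0) :
    mu (fun i => v (j.succAbove i)) = Nat.factorial (t - wt v) * Nat.factorial (wt v) := by
  rw [mu_eq]
  have hB := filter_card_succAbove v j 1
  rw [if_neg (by omega : ¬ v j = 1)] at hB
  have : (Finset.univ.filter fun i => v (j.succAbove i) = 1).card = wt v := by
    unfold wt; omega
  rw [this]

-- perm existence for equal-weight vectors
lemma exists_perm_of_wt_eq {n : ℕ} (u u' : Fin n → Fin 2) (h : wt u = wt u') :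
    ∃ π : Equiv.Perm (Fin n), ∀ j, u (π j) = u' j := by
  have hc1 : Fintype.card {j // u' j = 1} = Fintype.card {j // u j = 1} := by
    rw [Fintype.card_subtype, Fintype.card_subtype]
    exact h.symm
  have hc0 : Fintype.card {j // ¬ u' j = 1} = Fintype.card {j // ¬ u j = 1} := by
    rw [Fintype.card_subtype_compl, Fintype.card_subtype_compl, hc1]
  let e1 : {j // u' j = 1} ≃ {j // u j = 1} := Fintype.equivOfCardEq hc1
  let e0 : {j // ¬ u' j = 1} ≃ {j // ¬ u j = 1} := Fintype.equivOfCardEq hc0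
  let π : Equiv.Perm (Fin n) :=
    ((Equiv.sumCompl (fun j => u' j = 1)).symm.trans
      ((e1.sumCongr e0).trans (Equiv.sumCompl (fun j => u j = 1))))
  refine ⟨π, fun j => ?_⟩
  by_cases hj : u' j = 1
  · have : π j = (e1 ⟨j, hj⟩ : Fin n) := by
      show (Equiv.sumCompl fun j => u j = 1)
        (Sum.map (⇑e1) (⇑e0) ((Equiv.sumCompl fun j => u' j = 1).symm j)) = _
      rw [Equiv.sumCompl_symm_apply_of_pos (p := fun j => u' j = 1) hj]
      simp
    rw [this, (e1 ⟨j, hj⟩).2, hj]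
  · have : π j = (e0 ⟨j, hj⟩ : Fin n) := by
      show (Equiv.sumCompl fun j => u j = 1)
        (Sum.map (⇑e1) (⇑e0) ((Equiv.sumCompl fun j => u' j = 1).symm j)) = _
      rw [Equiv.sumCompl_symm_apply_of_neg (p := fun j => u' j = 1) hj]
      simp
    rw [this]
    have h1 := (e0 ⟨j, hj⟩).2
    have hu' : u' j = 0 := by omega
    have : u (e0 ⟨j, hj⟩ : Fin n) = 0 := by omega
    rw [this, hu']

-- K'
lemma count_pair {t : ℕ} {C : Multiset (Fin (t+1) → Fin 2)}
    (hC : IsCAX (Nat.factorial (t + 1)) t (t + 1) 2 C)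
    (v : Fin (t+1) → Fin 2) (j : Fin (t+1)) (hv : v j = 0) :
    C.count v + C.count (Function.update v j 1)
      = Nat.factorial (t - wt v) * Nat.factorial (wt v) := by
  have h1 := covers_eq hC j (fun i => v (j.succAbove i))
  rw [coversCount_succAbove, mu_restrict v j hv] at h1
  have h2 : Function.update v j 0 = v := by rw [← hv]; exact Function.update_eq_self j v
  rw [h2] at h1
  exact h1

-- swap, oriented case
lemma count_swap10 {t : ℕ} {C : Multiset (Fin (t+1) → Fin 2)}
    (hC : IsCAX (Nat.factorial (t + 1)) t (t + 1) 2 C)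
    (u : Fin (t+1) → Fin 2) (p q : Fin (t+1)) (hup : u p = 1) (huq : u q = 0) :
    C.count (fun j => u (Equiv.swap p q j)) = C.count u := by
  have hpq : p ≠ q := by intro h; rw [h, huq] at hup; exact absurd hup (by decide)
  set w := Function.update u p 0 with hw
  have hwp : w p = 0 := by simp [hw]
  have hwq : w q = 0 := by rw [hw, Function.update_of_ne (Ne.symm hpq)]; exact huq
  have hA := count_pair hC w p hwp
  have hB := count_pair hC w q hwq
  have hup' : Function.update w p 1 = u := by
    funext k
    by_cases hk : k = p
    · subst hk; simp [hup]
    · rw [Function.update_of_ne hk, hw, Function.update_of_ne hk]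
  have huq' : Function.update w q 1 = fun j => u (Equiv.swap p q j) := by
    funext k
    by_cases hk : k = q
    · subst hk
      rw [Function.update_self, Equiv.swap_apply_right, hup]
    · rw [Function.update_of_ne hk]
      by_cases hk' : k = p
      · subst hk'
        rw [Equiv.swap_apply_left, hwp, huq]
      · rw [Equiv.swap_apply_of_ne_of_ne hk' hk, hw, Function.update_of_ne hk']
  rw [hup'] at hA
  rw [huq'] at hB
  omega

lemma count_swap {t : ℕ} {C : Multiset (Fin (t+1) → Fin 2)}
    (hC : IsCAX (Nat.factorial (t + 1)) t (t + 1) 2 C)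
    (u : Fin (t+1) → Fin 2) (p q : Fin (t+1)) :
    C.count (fun j => u (Equiv.swap p q j)) = C.count u := by
  by_cases h : u p = u q
  · have : (fun j => u (Equiv.swap p q j)) = u := by
      funext k
      by_cases hk : k = p
      · subst hk; rw [Equiv.swap_apply_left, h]
      · by_cases hk' : k = q
        · subst hk'; rw [Equiv.swap_apply_right, h]
        · rw [Equiv.swap_apply_of_ne_of_ne hk hk']
    rw [this]
  · rcases (by omega : (u p = 1 ∧ u q = 0) ∨ (u p = 0 ∧ u q = 1)) with ⟨h1, h2⟩ | ⟨h1, h2⟩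
    · exact count_swap10 hC u p q h1 h2
    · rw [show Equiv.swap p q = Equiv.swap q p from Equiv.swap_comm p q]
      exact count_swap10 hC u q p h2 h1

lemma count_perm {t : ℕ} {C : Multiset (Fin (t+1) → Fin 2)}
    (hC : IsCAX (Nat.factorial (t + 1)) t (t + 1) 2 C)
    (π : Equiv.Perm (Fin (t+1))) :
    ∀ u : Fin (t+1) → Fin 2, C.count (fun j => u (π j)) = C.count u := by
  refine Equiv.Perm.swap_induction_on π (fun u => by simp) ?_
  intro f x y hxy ih u
  have h : (fun j => u ((Equiv.swap x y * f) j)) = fun j => (fun k => u (Equiv.swap x y k)) (f j) := by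
    funext j; rw [Equiv.Perm.mul_apply]
  rw [h, ih (fun k => u (Equiv.swap x y k)), count_swap hC]

lemma count_wt_eq {t : ℕ} {C : Multiset (Fin (t+1) → Fin 2)}
    (hC : IsCAX (Nat.factorial (t + 1)) t (t + 1) 2 C)
    (u u' : Fin (t+1) → Fin 2) (h : wt u = wt u') :
    C.count u = C.count u' := by
  obtain ⟨π, hπ⟩ := exists_perm_of_wt_eq u u' h
  have : u' = fun j => u (π j) := by funext j; rw [hπ j]
  rw [this, count_perm hC]

-- canonical vectors
def can (n i : ℕ) : Fin n → Fin 2 := fun j => if (j : ℕ) < i then 1 else 0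

lemma wt_can {n i : ℕ} (h : i ≤ n) : wt (can n i) = i := by
  unfold wt can
  have h1 : ∀ j : Fin n, ((if (j : ℕ) < i then (1 : Fin 2) else 0) = 1) ↔ (j : ℕ) < i := by
    intro j
    by_cases hj : (j : ℕ) < i <;> simp [hj]
  rw [Finset.filter_congr (fun j _ => h1 j), Finset.card_filter,
    Fin.sum_univ_eq_sum_range (fun j => if j < i then 1 else 0) n, ← Finset.card_filter]
  have : (Finset.range n).filter (fun j => j < i) = Finset.range i := by
    ext x; simp only [Finset.mem_filter, Finset.mem_range]; omega
  rw [this, Finset.card_range]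

/-- In a CA_X((t+1)!; t, t+1, 2), for each `0 ≤ i ≤ t+1` there is a
constant `x i` such that every vector of `{0,1}^{t+1}` of weight `i` appears as a row
exactly `x i` times; moreover `x i + x (i+1) = i!·(t−i)!` for `0 ≤ i ≤ t`. -/
theorem binary_cax_weight_multiplicities (t : ℕ) (ht : 1 ≤ t)
    (C : Multiset (Fin (t + 1) → Fin 2))
    (hC : IsCAX (Nat.factorial (t + 1)) t (t + 1) 2 C) :
    ∃ x : ℕ → ℕ,
      (∀ u : Fin (t + 1) → Fin 2,
        C.count u = x (Finset.univ.filter fun j => u j = 1).card) ∧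
      (∀ i ≤ t, x i + x (i + 1) = Nat.factorial i * Nat.factorial (t - i)) := by
  refine ⟨fun i => C.count (can (t+1) (min i (t+1))), ?_, ?_⟩
  · intro u
    have hwu : wt u ≤ t + 1 := wt_le u
    have : min (wt u) (t+1) = wt u := by omega
    show C.count u = C.count (can (t+1) (min (wt u) (t+1)))
    rw [this]
    exact count_wt_eq hC u (can (t+1) (wt u)) (by rw [wt_can hwu])
  · intro i hi
    have hmin : min i (t+1) = i := by omega
    have hmin' : min (i+1) (t+1) = i+1 := by omega
    show C.count (can (t+1) (min i (t+1))) + C.count (can (t+1) (min (i+1) (t+1)))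
      = Nat.factorial i * Nat.factorial (t - i)
    rw [hmin, hmin']
    set v := can (t+1) i with hv
    have hwv : wt v = i := wt_can (by omega)
    have hj : v ⟨t, by omega⟩ = 0 := by
      show (if (t : ℕ) < i then (1 : Fin 2) else 0) = 0
      rw [if_neg (by omega)]
    have hk := count_pair hC v ⟨t, by omega⟩ hj
    rw [hwv] at hk
    have hwup : wt (Function.update v ⟨t, by omega⟩ 1) = i + 1 := by
      rw [wt_update_one v _ hj, hwv]
    have : C.count (Function.update v ⟨t, by omega⟩ 1) = C.count (can (t+1) (i+1)) :=
      count_wt_eq hC _ _ (by rw [hwup, wt_can (by omega)])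
    rw [this] at hk
    rw [Nat.mul_comm] at hk
    exact hk
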